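/- Let (I_j)_{j∈[l]} be ideals in a commutative ring such that the concatenation of their chosen generating sets forms a regular sequence in any order. Then the intersection ∩_{j∈[l]} I_j equals the product ∏_{j∈[l]} I_j. -/

import Mathlib

open List RingTheory.Sequence Ideal

section Aux
variable {R : Type*} [CommRing R]

/-- `r` is a nonzerodivisor modulo the ideal `K`. -/
def Nzd (K : Ideal R) (r : R) : Prop := ∀ f : R, r * f ∈ K → f ∈ K

theorem my_subperm_append {α : Type*} {a b c d : List α} (h1 : a <+~ b) (h2 : c <+~ d) :
    a ++ c <+~ b ++ d := by
  obtain ⟨a', pa, sa⟩ := h1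
  obtain ⟨c', pc, sc⟩ := h2
  exact ⟨a' ++ c', pa.append pc, sa.append sc⟩

theorem my_subperm_cons {α : Type*} {a b : List α} (t : α) (h : a <+~ b) :
    t :: a <+~ t :: b := by
  obtain ⟨l, pl, sl⟩ := h
  exact ⟨t :: l, pl.cons t, sl.cons₂ t⟩

theorem my_exists_perm_append {α : Type*} {a b : List α} (h : a <+~ b) :
    ∃ l, b.Perm (a ++ l) := by
  obtain ⟨a', pa, sa⟩ := h
  obtain ⟨l, hl⟩ := sa.exists_perm_append
  exact ⟨l, hl.trans (pa.append_right l)⟩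

theorem my_perm_swap {α : Type*} (a b c : List α) :
    (a ++ (b ++ c)).Perm (b ++ (a ++ c)) := by
  rw [← List.append_assoc, ← List.append_assoc]
  exact List.perm_append_comm.append_right c

theorem nzd_of_wr {g : List R} {r : R} (h : IsWeaklyRegular R (g ++ [r])) :
    Nzd (Ideal.ofList g) r := by
  rw [isWeaklyRegular_append_iff, isWeaklyRegular_singleton_iff] at h
  have hK : (Ideal.ofList g • ⊤ : Submodule R R) = Ideal.ofList g := by
    rw [smul_eq_mul, Ideal.mul_top]
  intro f hf
  have h0 : r • Submodule.Quotient.mk (p := (Ideal.ofList g • ⊤ : Submodule R R)) f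
      = r • (0 : R ⧸ (Ideal.ofList g • ⊤ : Submodule R R)) := by
    rw [smul_zero, ← Submodule.Quotient.mk_smul, Submodule.Quotient.mk_eq_zero, hK,
      smul_eq_mul]
    exact hf
  have := h.2 h0
  rw [Submodule.Quotient.mk_eq_zero, hK] at this
  exact this

theorem nzd_of_subperm {pool : List R} (hp : ∀ L, L <+~ pool → IsWeaklyRegular R L)
    {g : List R} {r : R} (h : (g ++ [r] : List R) <+~ pool) : Nzd (Ideal.ofList g) r :=
  nzd_of_wr (hp _ h)

theorem lemC {A B : Ideal R} {t : R} (h : Nzd (A ⊔ B) t) :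
    (A ⊔ Ideal.span {t}) ⊓ (B ⊔ Ideal.span {t}) = (A ⊓ B) ⊔ Ideal.span {t} := by
  refine le_antisymm ?_ (sup_le (le_inf (le_sup_of_le_left inf_le_left)
    (le_sup_of_le_left inf_le_right)) (le_inf le_sup_right le_sup_right))
  intro f hf
  rw [Submodule.mem_inf] at hf
  obtain ⟨hfA, hfB⟩ := hf
  rw [Submodule.mem_sup] at hfA hfB
  obtain ⟨i, hi, z, hz, hizf⟩ := hfA
  obtain ⟨j, hj, w, hw, hjwf⟩ := hfB
  rw [Ideal.mem_span_singleton'] at hz hw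
  obtain ⟨a, rfl⟩ := hz
  obtain ⟨b, rfl⟩ := hw
  have hab : b - a ∈ A ⊔ B := by
    apply h
    have h3 : t * (b - a) = i - j := by linear_combination hjwf - hizf
    rw [h3]
    exact sub_mem (mem_sup_left hi) (mem_sup_right hj)
  rw [Submodule.mem_sup] at hab
  obtain ⟨i', hi', j', hj', hij'⟩ := hab
  have key : f - (a + i') * t ∈ A ⊓ B := by
    constructor
    · have : f - (a + i') * t = i - i' * t + (a * t + i' * t - (a + i') * t) := by
        rw [← hizf]; ring
      rw [this]
      have h2 : (a * t + i' * t - (a + i') * t) = 0 := by ring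
      rw [h2, add_zero]
      exact sub_mem hi (Ideal.mul_mem_right t _ hi')
    · have : f - (a + i') * t = j + j' * t := by
        linear_combination -hjwf - t * hij'
      rw [this]
      exact add_mem hj (Ideal.mul_mem_right t _ hj')
  have : f = (f - (a + i') * t) + (a + i') * t := by ring
  rw [this]
  exact Submodule.add_mem_sup key (Ideal.mem_span_singleton'.mpr ⟨_, rfl⟩)

/-- fold of intersection over a list of ideals -/
def infFold (l : List (Ideal R)) : Ideal R := l.foldr (· ⊓ ·) ⊤

@[simp] theorem infFold_nil : infFold ([] : List (Ideal R)) = ⊤ := rfl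
@[simp] theorem infFold_cons (K : Ideal R) (l : List (Ideal R)) :
    infFold (K :: l) = K ⊓ infFold l := rfl

theorem lemF {l : List (Ideal R)} {r : R} (h : ∀ K ∈ l, Nzd K r) : Nzd (infFold l) r := by
  induction l with
  | nil => intro f _; trivial
  | cons K l ih =>
    intro f hf
    rw [infFold_cons, Submodule.mem_inf] at hf ⊢
    exact ⟨h K mem_cons_self f hf.1, ih (fun K hK => h K (mem_cons_of_mem _ hK)) f hf.2⟩

theorem lemD {A B : Ideal R} (x : List R)
    (h : ∀ p r, (p ++ [r] : List R) <+~ x → Nzd (A ⊔ B ⊔ Ideal.ofList p) r) :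
    (A ⊔ Ideal.ofList x) ⊓ (B ⊔ Ideal.ofList x) = (A ⊓ B) ⊔ Ideal.ofList x := by
  induction x generalizing A B with
  | nil => simp
  | cons t x' ih =>
    have ht : Nzd (A ⊔ B) t := by
      have := h [] t (by simpa using List.singleton_subperm_iff.mpr (mem_cons_self t x'))
      simpa using this
    have hrec : ((A ⊔ Ideal.span {t}) ⊔ Ideal.ofList x') ⊓ ((B ⊔ Ideal.span {t}) ⊔ Ideal.ofList x')
        = ((A ⊔ Ideal.span {t}) ⊓ (B ⊔ Ideal.span {t})) ⊔ Ideal.ofList x' := by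
      apply ih
      intro p r hpr
      have h2 := h (t :: p) r (by
        have : ((t :: p) ++ [r] : List R) = t :: (p ++ [r]) := rfl
        rw [this]
        exact my_subperm_cons t hpr)
      have heq : A ⊔ Ideal.span {t} ⊔ (B ⊔ Ideal.span {t}) ⊔ Ideal.ofList p
          = A ⊔ B ⊔ Ideal.ofList (t :: p) := by
        rw [ofList_cons, sup_sup_sup_comm, sup_idem, sup_assoc]
      rw [heq]
      exact h2
    simp only [ofList_cons, ← sup_assoc]
    rw [hrec, lemC ht, sup_assoc]

theorem lemE (gs : List (List R)) (x : List R)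
    (hp : ∀ L, L <+~ gs.flatten ++ x → IsWeaklyRegular R L) :
    infFold (gs.map fun g => Ideal.ofList g ⊔ Ideal.ofList x)
      = infFold (gs.map Ideal.ofList) ⊔ Ideal.ofList x := by
  induction gs generalizing x with
  | nil => simp
  | cons g₀ rest ih =>
    have hsub : ∀ (y : List R), y <+~ x →
        ∀ L, L <+~ rest.flatten ++ y → IsWeaklyRegular R L := by
      intro y hy L hL
      apply hp
      refine hL.trans ?_
      have h1 : rest.flatten ++ y <+~ rest.flatten ++ x :=
        my_subperm_append (Subperm.refl _) hy
      refine h1.trans ?_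
      have h2 : (rest.flatten ++ x : List R) <+~ g₀ ++ (rest.flatten ++ x) :=
        (List.sublist_append_right g₀ _).subperm
      simpa [List.flatten_cons, List.append_assoc] using h2
    have step1 : infFold (rest.map fun g => Ideal.ofList g ⊔ Ideal.ofList x)
        = infFold (rest.map Ideal.ofList) ⊔ Ideal.ofList x :=
      ih x (hsub x (Subperm.refl x))
    have step2 : (Ideal.ofList g₀ ⊔ Ideal.ofList x) ⊓ (infFold (rest.map Ideal.ofList)
        ⊔ Ideal.ofList x) = (Ideal.ofList g₀ ⊓ infFold (rest.map Ideal.ofList))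
        ⊔ Ideal.ofList x := by
      apply lemD
      intro p r hpr
      -- rewrite the ideal as an intersection over rest of ofList (g ++ (g₀ ++ p))
      have hpx : (p ++ [r] : List R) <+~ x := hpr
      have hpsub : (p : List R) <+~ x := (List.sublist_append_left p [r]).subperm.trans hpx
      have hE : infFold (rest.map fun g => Ideal.ofList g ⊔ Ideal.ofList (g₀ ++ p))
          = infFold (rest.map Ideal.ofList) ⊔ Ideal.ofList (g₀ ++ p) := by
        apply ih
        intro L hL
        apply hp
        refine hL.trans ?_
        have h1 : (rest.flatten ++ (g₀ ++ p) : List R).Perm (g₀ ++ (rest.flatten ++ p)) :=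
          my_perm_swap _ _ _
        refine h1.subperm.trans ?_
        have h2 : (g₀ ++ (rest.flatten ++ p) : List R) <+~ g₀ ++ (rest.flatten ++ x) :=
          my_subperm_append (Subperm.refl _) (my_subperm_append (Subperm.refl _) hpsub)
        simpa [List.flatten_cons, List.append_assoc] using h2
      have heq : Ideal.ofList g₀ ⊔ infFold (rest.map Ideal.ofList) ⊔ Ideal.ofList p
          = infFold (rest.map fun g => Ideal.ofList g ⊔ Ideal.ofList (g₀ ++ p)) := by
        rw [hE, ofList_append, sup_assoc, sup_comm (Ideal.ofList g₀), ← sup_assoc, sup_right_comm]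
      rw [heq]
      apply lemF
      intro K hK
      rw [List.mem_map] at hK
      obtain ⟨g, hg, rfl⟩ := hK
      rw [← ofList_append]
      apply nzd_of_subperm hp
      have hperm : ((g ++ (g₀ ++ p)) ++ [r] : List R).Perm (g₀ ++ (g ++ (p ++ [r]))) := by
        have : ((g ++ (g₀ ++ p)) ++ [r] : List R) = g ++ (g₀ ++ (p ++ [r])) := by
          simp [List.append_assoc]
        rw [this]
        exact my_perm_swap g g₀ (p ++ [r])
      refine hperm.subperm.trans ?_
      have hgf : (g : List R) <+~ rest.flatten := (List.sublist_flatten_of_mem hg).subperm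
      have h3 : (g₀ ++ (g ++ (p ++ [r])) : List R) <+~ g₀ ++ (rest.flatten ++ x) :=
        my_subperm_append (Subperm.refl _) (my_subperm_append hgf hpx)
      simpa [List.flatten_cons, List.append_assoc] using h3
    simp only [List.map_cons, infFold_cons, step1, step2]

theorem lemG {J : Ideal R} (x : List R)
    (h : ∀ p r, (p ++ [r] : List R) <+~ x → Nzd (J ⊔ Ideal.ofList p) r) :
    J ⊓ Ideal.ofList x = J * Ideal.ofList x := by
  induction x with
  | nil => simp
  | cons t x' ih =>
    refine le_antisymm ?_ Ideal.mul_le_inf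
    intro f hf
    rw [Submodule.mem_inf] at hf
    obtain ⟨hfJ, hfX⟩ := hf
    rw [ofList_cons, Submodule.mem_sup] at hfX
    obtain ⟨z, hz, w, hw, hzwf⟩ := hfX
    rw [Ideal.mem_span_singleton'] at hz
    obtain ⟨a, rfl⟩ := hz
    have hNzd : Nzd (J ⊔ Ideal.ofList x') t := by
      apply h x' t
      exact (List.perm_append_singleton t x').subperm
    have ha : a ∈ J ⊔ Ideal.ofList x' := by
      apply hNzd
      have : t * a = f - w := by linear_combination hzwf
      rw [this]
      exact sub_mem (mem_sup_left hfJ) (mem_sup_right hw)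
    rw [Submodule.mem_sup] at ha
    obtain ⟨j, hj, u, hu, hjua⟩ := ha
    have hkey : f - j * t ∈ J ⊓ Ideal.ofList x' := by
      constructor
      · exact sub_mem hfJ (Ideal.mul_mem_right t _ hj)
      · have : f - j * t = u * t + w := by linear_combination -hzwf - t * hjua
        rw [this]
        exact add_mem (Ideal.mul_mem_right t _ hu) hw
    rw [ih (fun p r hpr => h p r (hpr.trans (List.sublist_cons_self t x').subperm))] at hkey
    have hmono : J * Ideal.ofList x' ≤ J * Ideal.ofList (t :: x') :=
      Ideal.mul_mono_right (by rw [ofList_cons]; exact le_sup_right)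
    have hjt : j * t ∈ J * Ideal.ofList (t :: x') :=
      Ideal.mul_mem_mul hj (Ideal.subset_span (by simp))
    have : f = j * t + (f - j * t) := by ring
    rw [this]
    exact add_mem hjt (hmono hkey)

theorem listMain (gs : List (List R))
    (hp : ∀ L, L <+~ gs.flatten → IsWeaklyRegular R L) :
    infFold (gs.map Ideal.ofList) = (gs.map Ideal.ofList).prod := by
  induction gs with
  | nil => simp [infFold, Ideal.one_eq_top]
  | cons g₀ rest ih =>
    have hp' : ∀ L, L <+~ rest.flatten → IsWeaklyRegular R L := by
      intro L hL
      apply hp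
      refine hL.trans ?_
      have : (rest.flatten : List R) <+~ g₀ ++ rest.flatten :=
        (List.sublist_append_right g₀ _).subperm
      simpa [List.flatten_cons] using this
    have ihP := ih hp'
    have hG : infFold (rest.map Ideal.ofList) ⊓ Ideal.ofList g₀
        = infFold (rest.map Ideal.ofList) * Ideal.ofList g₀ := by
      apply lemG
      intro p r hpr
      have hpsub : (p : List R) <+~ g₀ := (List.sublist_append_left p [r]).subperm.trans hpr
      have hE : infFold (rest.map Ideal.ofList) ⊔ Ideal.ofList p
          = infFold (rest.map fun g => Ideal.ofList g ⊔ Ideal.ofList p) := by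
        refine (lemE rest p ?_).symm
        intro L hL
        apply hp
        refine hL.trans ?_
        have h1 : (rest.flatten ++ p : List R) <+~ rest.flatten ++ g₀ :=
          my_subperm_append (Subperm.refl _) hpsub
        refine h1.trans ?_
        refine (List.perm_append_comm).subperm.trans ?_
        rw [List.flatten_cons]
      rw [hE]
      apply lemF
      intro K hK
      rw [List.mem_map] at hK
      obtain ⟨g, hg, rfl⟩ := hK
      rw [← ofList_append]
      apply nzd_of_subperm hp
      have hgf : (g : List R) <+~ rest.flatten := (List.sublist_flatten_of_mem hg).subperm
      have h3 : ((g ++ p) ++ [r] : List R) <+~ rest.flatten ++ g₀ := by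
        have : ((g ++ p) ++ [r] : List R) = g ++ (p ++ [r]) := by simp
        rw [this]
        exact my_subperm_append hgf hpr
      refine h3.trans ?_
      refine (List.perm_append_comm).subperm.trans ?_
      rw [List.flatten_cons]
    calc infFold ((g₀ :: rest).map Ideal.ofList)
        = Ideal.ofList g₀ ⊓ infFold (rest.map Ideal.ofList) := by simp
      _ = infFold (rest.map Ideal.ofList) ⊓ Ideal.ofList g₀ := inf_comm _ _
      _ = infFold (rest.map Ideal.ofList) * Ideal.ofList g₀ := hG
      _ = Ideal.ofList g₀ * (rest.map Ideal.ofList).prod := by rw [ihP, mul_comm]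
      _ = ((g₀ :: rest).map Ideal.ofList).prod := by simp

theorem infFold_ofFn {n : ℕ} (f : Fin n → Ideal R) :
    infFold (List.ofFn f) = ⨅ j, f j := by
  induction n with
  | zero => simpa [infFold] using (iInf_of_empty f).symm
  | succ n ih =>
    rw [List.ofFn_succ, infFold_cons, ih]
    refine le_antisymm (le_iInf fun j => ?_) (le_inf (iInf_le _ 0)
      (le_iInf fun i => iInf_le _ i.succ))
    induction j using Fin.cases with
    | zero => exact inf_le_left
    | succ i => exact inf_le_right.trans (iInf_le _ i)

end Aux



/-- let `(I_j)_{j ∈ [l]}` be ideals of a commutative ring, each generated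
by a finite list `gens j` of elements, such that the concatenation of these generating
lists, in any order, is a regular sequence.  Then `⋂_j I_j = ∏_j I_j`. -/
theorem iInf_eq_prod_of_regular {R : Type*} [CommRing R] {l : ℕ}
    (gens : Fin l → List R) (I : Fin l → Ideal R)
    (hI : ∀ j, I j = Ideal.ofList (gens j))
    (hreg : ∀ L : List R, L.Perm (List.ofFn gens).flatten →
      RingTheory.Sequence.IsRegular R L) :
    (⨅ j, I j) = ∏ j, I j := by
  have hp : ∀ L, L <+~ (List.ofFn gens).flatten → RingTheory.Sequence.IsWeaklyRegular R L := by
    intro L hL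
    obtain ⟨l', hl'⟩ := my_exists_perm_append hL
    have := (hreg (L ++ l') hl'.symm).toIsWeaklyRegular
    exact ((RingTheory.Sequence.isWeaklyRegular_append_iff R L l').mp this).1
  have hmain := listMain (List.ofFn gens) hp
  have hmap : (List.ofFn gens).map Ideal.ofList = List.ofFn I := by
    rw [List.map_ofFn]
    exact congrArg List.ofFn (funext fun j => (hI j).symm)
  rw [hmap, infFold_ofFn, List.prod_ofFn] at hmain
  exact hmain
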